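/- Let S be a finite singleton-rich semigroup and s, t ∈ S. Then (s φ^{(s,t)})* = (φ^{(s,t)} t)⁺ = φ^{(s,t)} and (s ψ^{(s,t)})* = (ψ^{(s,t)} t)⁺ = ψ^{(s,t)}. Consequently φ^{(s φ^{(s,t)}, φ^{(s,t)} t)} = φ^{(s,t)} and ψ^{(s ψ^{(s,t)}, ψ^{(s,t)} t)} = ψ^{(s,t)}. -/
import Mathlib


open scoped Classical

/-- φ*(s): the idempotent right identities of `s`. -/
def rIds {S : Type*} [Mul S] (s : S) : Set S := {e | e * e = e ∧ s * e = s}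

/-- φ⁺(s): the idempotent left identities of `s`. -/
def lIds {S : Type*} [Mul S] (s : S) : Set S := {e | e * e = e ∧ e * s = s}

/-- `x` is the (necessarily unique) element of a singleton kernel (minimal ideal) of the
subsemigroup `T`: `{x}` is an ideal of `T`, hence the minimal ideal of `T`. -/
def IsKer {S : Type*} [Semigroup S] (T : Subsemigroup S) (x : S) : Prop :=
  x ∈ T ∧ ∀ a ∈ T, a * x = x ∧ x * a = x

/-- The natural partial order on idempotents: `e ≤ f` iff `ef = fe = e`. -/
def nle {S : Type*} [Mul S] (e f : S) : Prop := e * f = e ∧ f * e = e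

/-- The relation `≪`: `s ≪ t` iff `s = s⁺ t s*`, where `sa s = s*` and `pl s = s⁺`. -/
def ll {S : Type*} [Mul S] (sa pl : S → S) (s t : S) : Prop := s = pl s * t * sa s

/-- φ(x,y) = (x* y)⁺. -/
def phiF {S : Type*} [Mul S] (sa pl : S → S) (x y : S) : S := pl (sa x * y)

/-- ψ(x,y) = (x y⁺)*. -/
def psiF {S : Type*} [Mul S] (sa pl : S → S) (x y : S) : S := sa (x * pl y)

/-- The φ-sequence: `(s^φ₀, t^φ₀) = (s, t)`,
`s^φ_{i+1} = s^φ_i φ(s^φ_i, t^φ_i)`, `t^φ_{i+1} = (s^φ_i)* t^φ_i`. -/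
def phiSeq {S : Type*} [Mul S] (sa pl : S → S) (s t : S) : ℕ → S × S
  | 0 => (s, t)
  | i + 1 =>
      let p := phiSeq sa pl s t i
      (p.1 * phiF sa pl p.1 p.2, sa p.1 * p.2)

/-- The ψ-sequence: `(s^ψ₀, t^ψ₀) = (s, t)`,
`s^ψ_{i+1} = s^ψ_i (t^ψ_i)⁺`, `t^ψ_{i+1} = ψ(s^ψ_i, t^ψ_i) t^ψ_i`. -/
def psiSeq {S : Type*} [Mul S] (sa pl : S → S) (s t : S) : ℕ → S × S
  | 0 => (s, t)
  | i + 1 =>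
      let p := psiSeq sa pl s t i
      (p.1 * pl p.2, psiF sa pl p.1 p.2 * p.2)

/-- `e` is the stable (eventual) value `φ^{(s,t)}` of the sequence `φ(s^φ_i, t^φ_i)`. -/
def IsPhiLim {S : Type*} [Mul S] (sa pl : S → S) (s t e : S) : Prop :=
  ∃ N : ℕ, ∀ i ≥ N, phiF sa pl (phiSeq sa pl s t i).1 (phiSeq sa pl s t i).2 = e

/-- `e` is the stable (eventual) value `ψ^{(s,t)}` of the sequence `ψ(s^ψ_i, t^ψ_i)`. -/
def IsPsiLim {S : Type*} [Mul S] (sa pl : S → S) (s t e : S) : Prop :=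
  ∃ N : ℕ, ∀ i ≥ N, psiF sa pl (psiSeq sa pl s t i).1 (psiSeq sa pl s t i).2 = e


section Stmt14Helpers

variable {S : Type*} [Semigroup S]

private lemma sa_idem' (sa : S → S)
    (hsa : ∀ s : S, IsKer (Subsemigroup.closure (rIds s)) (sa s)) (x : S) :
    sa x * sa x = sa x := ((hsa x).2 _ (hsa x).1).1

private lemma pl_idem' (pl : S → S)
    (hpl : ∀ s : S, IsKer (Subsemigroup.closure (lIds s)) (pl s)) (x : S) :
    pl x * pl x = pl x := ((hpl x).2 _ (hpl x).1).1

private lemma mul_sa' (sa : S → S)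
    (hsa : ∀ s : S, IsKer (Subsemigroup.closure (rIds s)) (sa s)) (x : S) :
    x * sa x = x := by
  have key : ∀ a ∈ Subsemigroup.closure (rIds x), x * a = x := by
    intro a ha
    induction ha using Subsemigroup.closure_induction with
    | mem a ha => exact ha.2
    | mul a b _ _ ha hb => rw [← mul_assoc, ha, hb]
  exact key _ (hsa x).1

private lemma pl_mul' (pl : S → S)
    (hpl : ∀ s : S, IsKer (Subsemigroup.closure (lIds s)) (pl s)) (x : S) :
    pl x * x = x := by
  have key : ∀ a ∈ Subsemigroup.closure (lIds x), a * x = x := by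
    intro a ha
    induction ha using Subsemigroup.closure_induction with
    | mem a ha => exact ha.2
    | mul a b _ _ ha hb => rw [mul_assoc, hb, ha]
  exact key _ (hpl x).1

private lemma sa_absorb' (sa : S → S)
    (hsa : ∀ s : S, IsKer (Subsemigroup.closure (rIds s)) (sa s)) (x f : S)
    (hf : f * f = f) (h : x * f = x) : f * sa x = sa x ∧ sa x * f = sa x :=
  (hsa x).2 f (Subsemigroup.subset_closure ⟨hf, h⟩)

private lemma pl_absorb' (pl : S → S)
    (hpl : ∀ s : S, IsKer (Subsemigroup.closure (lIds s)) (pl s)) (x f : S)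
    (hf : f * f = f) (h : f * x = x) : f * pl x = pl x ∧ pl x * f = pl x :=
  (hpl x).2 f (Subsemigroup.subset_closure ⟨hf, h⟩)

private lemma phi_main (sa pl : S → S)
    (hsa : ∀ s : S, IsKer (Subsemigroup.closure (rIds s)) (sa s))
    (hpl : ∀ s : S, IsKer (Subsemigroup.closure (lIds s)) (pl s))
    (s t e : S) (hphi : IsPhiLim sa pl s t e) :
    sa (s * e) = e ∧ pl (e * t) = e := by
  obtain ⟨N, hN⟩ := hphi
  set q := phiSeq sa pl s t with hq
  set F : ℕ → S := fun i => phiF sa pl (q i).1 (q i).2 with hFdef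
  have hNF : ∀ i, N ≤ i → F i = e := fun i hi => hN i hi
  have hfst : ∀ i, (q (i + 1)).1 = (q i).1 * F i := fun i => rfl
  have hsnd : ∀ i, (q (i + 1)).2 = sa (q i).1 * (q i).2 := fun i => rfl
  have hFd : ∀ i, F i = pl (sa (q i).1 * (q i).2) := fun i => rfl
  have Fidem : ∀ i, F i * F i = F i := fun i => pl_idem' pl hpl _
  -- the kernel absorbs the generator `sa (q i).1`
  have h1 : ∀ i, sa (q i).1 * F i = F i ∧ F i * sa (q i).1 = F i := fun i =>
    pl_absorb' pl hpl _ _ (sa_idem' sa hsa _)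
      (by rw [← mul_assoc, sa_idem' sa hsa])
  -- monotonicity: F (i+1) ≤ F i
  have h2 : ∀ i, F i * F (i + 1) = F (i + 1) ∧ F (i + 1) * F i = F (i + 1) := by
    intro i
    have hri : F i * sa ((q (i + 1)).1) = sa ((q (i + 1)).1) :=
      (sa_absorb' sa hsa _ _ (Fidem i) (by rw [hfst i, mul_assoc, Fidem])).1
    exact pl_absorb' pl hpl _ _ (Fidem i) (by rw [← mul_assoc, hri])
  have chain : ∀ i k, F i * F (i + k) = F (i + k) ∧ F (i + k) * F i = F (i + k) := by
    intro i k
    induction k with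
    | zero => exact ⟨Fidem i, Fidem i⟩
    | succ k ih =>
      have h2' := h2 (i + k)
      refine ⟨?_, ?_⟩
      · calc F i * F (i + k + 1) = F i * (F (i + k) * F (i + k + 1)) := by rw [h2'.1]
          _ = F i * F (i + k) * F (i + k + 1) := by rw [mul_assoc]
          _ = F (i + k) * F (i + k + 1) := by rw [ih.1]
          _ = F (i + k + 1) := h2'.1
      · calc F (i + k + 1) * F i = F (i + k + 1) * F (i + k) * F i := by rw [h2'.2]
          _ = F (i + k + 1) * (F (i + k) * F i) := mul_assoc _ _ _
          _ = F (i + k + 1) * F (i + k) := by rw [ih.2]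
          _ = F (i + k + 1) := h2'.2
  have h3 : ∀ i, e * F i = e ∧ F i * e = e := by
    intro i
    have hc := chain i N
    rw [hNF (i + N) (Nat.le_add_left N i)] at hc
    exact ⟨hc.2, hc.1⟩
  have h4 : ∀ i, (q i).1 * e = s * e := by
    intro i
    induction i with
    | zero => rfl
    | succ i ih => rw [hfst i, mul_assoc, (h3 i).2, ih]
  have h5 : ∀ i, e * (q i).2 = e * t := by
    intro i
    induction i with
    | zero => rfl
    | succ i ih =>
      have hesa : e * sa ((q i).1) = e := by
        calc e * sa ((q i).1) = e * F i * sa ((q i).1) := by rw [(h3 i).1]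
          _ = e * (F i * sa ((q i).1)) := mul_assoc _ _ _
          _ = e * F i := by rw [(h1 i).2]
          _ = e := (h3 i).1
      rw [hsnd i, ← mul_assoc, hesa, ih]
  have heidem : e * e = e := by rw [← hNF N le_rfl]; exact Fidem N
  have hA : (q (N + 1)).1 = s * e := by rw [hfst N, hNF N le_rfl]; exact h4 N
  have goalA : sa (s * e) = e := by
    have h1' := (h1 (N + 1)).1
    rw [hNF (N + 1) (Nat.le_succ N), hA] at h1'
    have habs := (sa_absorb' sa hsa (s * e) e heidem (by rw [mul_assoc, heidem])).2
    rw [← habs]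
    exact h1'
  have hplq : pl ((q (N + 2)).2) = e := by
    rw [hsnd (N + 1), ← hFd (N + 1)]
    exact hNF (N + 1) (Nat.le_succ N)
  have ht2 : (q (N + 2)).2 = e * t := by
    have hx := pl_mul' pl hpl ((q (N + 2)).2)
    rw [hplq] at hx
    rw [← hx]
    exact h5 (N + 2)
  have goalB : pl (e * t) = e := by rw [← ht2]; exact hplq
  exact ⟨goalA, goalB⟩

private lemma psi_main (sa pl : S → S)
    (hsa : ∀ s : S, IsKer (Subsemigroup.closure (rIds s)) (sa s))
    (hpl : ∀ s : S, IsKer (Subsemigroup.closure (lIds s)) (pl s))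
    (s t f : S) (hpsi : IsPsiLim sa pl s t f) :
    sa (s * f) = f ∧ pl (f * t) = f := by
  obtain ⟨M, hM⟩ := hpsi
  set q := psiSeq sa pl s t with hq
  set G : ℕ → S := fun i => psiF sa pl (q i).1 (q i).2 with hGdef
  have hMG : ∀ i, M ≤ i → G i = f := fun i hi => hM i hi
  have hfst : ∀ i, (q (i + 1)).1 = (q i).1 * pl ((q i).2) := fun i => rfl
  have hsnd : ∀ i, (q (i + 1)).2 = G i * (q i).2 := fun i => rfl
  have hGd : ∀ i, G i = sa ((q i).1 * pl ((q i).2)) := fun i => rfl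
  have Gidem : ∀ i, G i * G i = G i := fun i => sa_idem' sa hsa _
  have g1 : ∀ i, pl ((q i).2) * G i = G i ∧ G i * pl ((q i).2) = G i := fun i =>
    sa_absorb' sa hsa _ _ (pl_idem' pl hpl _)
      (by rw [mul_assoc, pl_idem' pl hpl])
  have g2 : ∀ i, G i * G (i + 1) = G (i + 1) ∧ G (i + 1) * G i = G (i + 1) := by
    intro i
    have hli : pl ((q (i + 1)).2) * G i = pl ((q (i + 1)).2) :=
      (pl_absorb' pl hpl _ _ (Gidem i) (by rw [hsnd i, ← mul_assoc, Gidem])).2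
    exact sa_absorb' sa hsa _ _ (Gidem i) (by rw [mul_assoc, hli])
  have chain : ∀ i k, G i * G (i + k) = G (i + k) ∧ G (i + k) * G i = G (i + k) := by
    intro i k
    induction k with
    | zero => exact ⟨Gidem i, Gidem i⟩
    | succ k ih =>
      have g2' := g2 (i + k)
      refine ⟨?_, ?_⟩
      · calc G i * G (i + k + 1) = G i * (G (i + k) * G (i + k + 1)) := by rw [g2'.1]
          _ = G i * G (i + k) * G (i + k + 1) := by rw [mul_assoc]
          _ = G (i + k) * G (i + k + 1) := by rw [ih.1]
          _ = G (i + k + 1) := g2'.1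
      · calc G (i + k + 1) * G i = G (i + k + 1) * G (i + k) * G i := by rw [g2'.2]
          _ = G (i + k + 1) * (G (i + k) * G i) := mul_assoc _ _ _
          _ = G (i + k + 1) * G (i + k) := by rw [ih.2]
          _ = G (i + k + 1) := g2'.2
  have g3 : ∀ i, f * G i = f ∧ G i * f = f := by
    intro i
    have hc := chain i M
    rw [hMG (i + M) (Nat.le_add_left M i)] at hc
    exact ⟨hc.2, hc.1⟩
  have g4 : ∀ i, f * (q i).2 = f * t := by
    intro i
    induction i with
    | zero => rfl
    | succ i ih => rw [hsnd i, ← mul_assoc, (g3 i).1, ih]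
  have g5 : ∀ i, (q i).1 * f = s * f := by
    intro i
    induction i with
    | zero => rfl
    | succ i ih =>
      have hplf : pl ((q i).2) * f = f := by
        calc pl ((q i).2) * f = pl ((q i).2) * (G i * f) := by rw [(g3 i).2]
          _ = pl ((q i).2) * G i * f := (mul_assoc _ _ _).symm
          _ = G i * f := by rw [(g1 i).1]
          _ = f := (g3 i).2
      rw [hfst i, mul_assoc, hplf, ih]
  have hfidem : f * f = f := by rw [← hMG M le_rfl]; exact Gidem M
  have hsa2 : sa ((q (M + 2)).1) = f := by
    rw [hfst (M + 1), ← hGd (M + 1)]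
    exact hMG (M + 1) (Nat.le_succ M)
  have hs2 : (q (M + 2)).1 = s * f := by
    have hx := mul_sa' sa hsa ((q (M + 2)).1)
    rw [hsa2] at hx
    rw [← hx]
    exact g5 (M + 2)
  have goalC : sa (s * f) = f := by rw [← hs2]; exact hsa2
  have ht1 : (q (M + 1)).2 = f * t := by rw [hsnd M, hMG M le_rfl]; exact g4 M
  have goalD : pl (f * t) = f := by
    have hd1 := (g1 (M + 1)).1
    rw [hMG (M + 1) (Nat.le_succ M), ht1] at hd1
    have habs := (pl_absorb' pl hpl (f * t) f hfidem (by rw [← mul_assoc, hfidem])).2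
    rw [← habs]
    exact hd1
  exact ⟨goalC, goalD⟩

end Stmt14Helpers

/-- `(s φ^{(s,t)})* = (φ^{(s,t)} t)⁺ = φ^{(s,t)}` and `(s ψ^{(s,t)})* = (ψ^{(s,t)} t)⁺ = ψ^{(s,t)}`;
consequently `φ^{(s φ^{(s,t)}, φ^{(s,t)} t)} = φ^{(s,t)}` and
`ψ^{(s ψ^{(s,t)}, ψ^{(s,t)} t)} = ψ^{(s,t)}`. -/
theorem stmt14 {S : Type*} [Semigroup S] [Fintype S] (sa pl : S → S)
    (hsa : ∀ s : S, IsKer (Subsemigroup.closure (rIds s)) (sa s))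
    (hpl : ∀ s : S, IsKer (Subsemigroup.closure (lIds s)) (pl s))
    (s t phiL psiL : S)
    (hphi : IsPhiLim sa pl s t phiL) (hpsi : IsPsiLim sa pl s t psiL) :
    (sa (s * phiL) = phiL ∧ pl (phiL * t) = phiL ∧
      sa (s * psiL) = psiL ∧ pl (psiL * t) = psiL) ∧
    (∀ e : S, IsPhiLim sa pl (s * phiL) (phiL * t) e → e = phiL) ∧
    (∀ e : S, IsPsiLim sa pl (s * psiL) (psiL * t) e → e = psiL) := by
  obtain ⟨hA, hB⟩ := phi_main sa pl hsa hpl s t phiL hphi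
  obtain ⟨hC, hD⟩ := psi_main sa pl hsa hpl s t psiL hpsi
  have heidem : phiL * phiL = phiL := by rw [← hA]; exact sa_idem' sa hsa _
  have hfidem : psiL * psiL = psiL := by rw [← hC]; exact sa_idem' sa hsa _
  have hphiF : phiF sa pl (s * phiL) (phiL * t) = phiL := by
    show pl (sa (s * phiL) * (phiL * t)) = phiL
    rw [hA, ← mul_assoc, heidem, hB]
  have hpsiF : psiF sa pl (s * psiL) (psiL * t) = psiL := by
    show sa ((s * psiL) * pl (psiL * t)) = psiL
    rw [hD, mul_assoc, hfidem, hC]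
  have constP : ∀ i, phiSeq sa pl (s * phiL) (phiL * t) i = (s * phiL, phiL * t) := by
    intro i
    induction i with
    | zero => rfl
    | succ i ih =>
      show (let p := phiSeq sa pl (s * phiL) (phiL * t) i;
        (p.1 * phiF sa pl p.1 p.2, sa p.1 * p.2)) = _
      rw [ih]
      show ((s * phiL) * phiF sa pl (s * phiL) (phiL * t), sa (s * phiL) * (phiL * t)) = _
      rw [hphiF, mul_assoc, heidem, hA, ← mul_assoc, heidem]
  have constQ : ∀ i, psiSeq sa pl (s * psiL) (psiL * t) i = (s * psiL, psiL * t) := by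
    intro i
    induction i with
    | zero => rfl
    | succ i ih =>
      show (let p := psiSeq sa pl (s * psiL) (psiL * t) i;
        (p.1 * pl p.2, psiF sa pl p.1 p.2 * p.2)) = _
      rw [ih]
      show ((s * psiL) * pl (psiL * t), psiF sa pl (s * psiL) (psiL * t) * (psiL * t)) = _
      rw [hpsiF, hD, mul_assoc, hfidem, ← mul_assoc, hfidem]
  refine ⟨⟨hA, hB, hC, hD⟩, ?_, ?_⟩
  · intro e he
    obtain ⟨N, hN⟩ := he
    have hx := hN N le_rfl
    rw [constP N, hphiF] at hx
    exact hx.symm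
  · intro e he
    obtain ⟨N, hN⟩ := he
    have hx := hN N le_rfl
    rw [constQ N, hpsiF] at hx
    exact hx.symm
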